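/- arXiv:1707.00756 — 2 statements merged into one kernel-verified Lean document; each statement's English description precedes it below -/
import Mathlib

section
/- For integers e ≥ 1 and 0 ≤ r ≤ e, the two expressions for the degree A_e^r agree: (∏_{j=0}^{r-1} C(e+j, r-j)) / (∏_{j=0}^{r-1} C(2j+1, j)) = 2^{-C(r,2)} · det(M), where M is the r×r matrix with entries M_{i,j} = C(e, r+1-2i+j) for i,j = 1,…,r. -/
open Finset Polynomial Nat

/-- Ascending factorial product over `ℚ`. -/
private lemma asc_prod (m : ℕ) : ∀ n : ℕ,
    (m ! : ℚ) * ∏ t ∈ Finset.range n, ((m : ℚ) + 1 + t) = ((m + n)! : ℚ)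
  | 0 => by simp
  | n + 1 => by
    rw [Finset.prod_range_succ, ← mul_assoc, asc_prod m n]
    have h : (m + (n + 1))! = (m + n + 1) * (m + n)! := by
      rw [show m + (n + 1) = (m + n) + 1 by ring, Nat.factorial_succ]
    rw [h]
    push_cast
    ring

/-- The polynomial `P_j(X) = ∏_{k=j+1}^{r-1} (X + k) * ∏_{k=0}^{j-1} ((e - k) - X)`. -/
private noncomputable def auxP (e r j : ℕ) : Polynomial ℚ :=
  (∏ k ∈ Finset.Ico (j + 1) r, (X + C (k : ℚ))) *
    (∏ k ∈ Finset.range j, (C ((e : ℚ) - k) - X))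

private lemma auxP_natDegree_lt (e r j : ℕ) (hj : j < r) : (auxP e r j).natDegree < r := by
  have h1 : (∏ k ∈ Finset.Ico (j + 1) r, (X + C (k : ℚ))).natDegree ≤ r - (j + 1) := by
    refine le_trans (Polynomial.natDegree_prod_le _ _) ?_
    refine le_trans (Finset.sum_le_card_nsmul _ _ 1 fun k _ => ?_) ?_
    · exact le_of_eq (Polynomial.natDegree_X_add_C _)
    · simp [Nat.card_Ico]
  have h2 : (∏ k ∈ Finset.range j, (C ((e : ℚ) - k) - X)).natDegree ≤ j := by
    refine le_trans (Polynomial.natDegree_prod_le _ _) ?_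
    refine le_trans (Finset.sum_le_card_nsmul _ _ 1 fun k _ => ?_) ?_
    · refine le_trans (Polynomial.natDegree_sub_le _ _) ?_
      refine max_le ?_ ?_
      · exact le_trans (le_of_eq (Polynomial.natDegree_C _)) (by norm_num)
      · exact le_of_eq Polynomial.natDegree_X
    · simp
  refine lt_of_le_of_lt (le_trans (Polynomial.natDegree_mul_le) (Nat.add_le_add h1 h2)) ?_
  omega

private lemma auxP_eval (e r j : ℕ) (t : ℚ) :
    (auxP e r j).eval t =
      (∏ k ∈ Finset.Ico (j + 1) r, (t + k)) *
        (∏ k ∈ Finset.range j, ((e : ℚ) - k - t)) := by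
  simp [auxP, Polynomial.eval_prod]

/-- The entrywise factorization of the binomial matrix. -/
private lemma entry_eq (e r : ℕ) (hre : r ≤ e) (i j : Fin r) :
    (if h : (0 : ℤ) ≤ (r : ℤ) + 1 - 2 * ((i : ℤ) + 1) + ((j : ℤ) + 1) then
        (e.choose ((r : ℤ) + 1 - 2 * ((i : ℤ) + 1) + ((j : ℤ) + 1)).toNat : ℚ)
      else 0) =
    ((e ! : ℚ) / (((2 * r - 1 - 2 * (i : ℕ))! : ℚ) * ((e - r + 2 * (i : ℕ))! : ℚ))) *
      (auxP e r (j : ℕ)).eval ((r : ℚ) - 2 * (i : ℕ)) := by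
  have hi : (i : ℕ) < r := i.isLt
  have hj : (j : ℕ) < r := j.isLt
  have hcond : (r : ℤ) + 1 - 2 * ((i : ℤ) + 1) + ((j : ℤ) + 1)
      = (r : ℤ) - 2 * (i : ℕ) + (j : ℕ) := by push_cast; ring
  rw [hcond, auxP_eval]
  by_cases hzn : (0 : ℤ) ≤ (r : ℤ) - 2 * (i : ℕ) + (j : ℕ)
  · rw [dif_pos hzn]
    set m : ℕ := ((r : ℤ) - 2 * (i : ℕ) + (j : ℕ)).toNat with hm
    have hmz : (m : ℤ) = (r : ℤ) - 2 * (i : ℕ) + (j : ℕ) := Int.toNat_of_nonneg hzn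
    by_cases hme : m ≤ e
    · -- main case: genuine binomial coefficient
      rw [Nat.cast_choose ℚ hme]
      have h1 : (∏ k ∈ Finset.Ico ((j : ℕ) + 1) r, ((r : ℚ) - 2 * (i : ℕ) + k))
          = ((2 * r - 1 - 2 * (i : ℕ))! : ℚ) / (m ! : ℚ) := by
        rw [Finset.prod_Ico_eq_prod_range]
        have hterm : ∀ t ∈ Finset.range (r - ((j : ℕ) + 1)),
            ((r : ℚ) - 2 * (i : ℕ) + (((j : ℕ) + 1) + t : ℕ)) = (m : ℚ) + 1 + t := by
          intro t _
          have : ((r : ℚ) - 2 * (i : ℕ) + (j : ℕ)) = (m : ℚ) := by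
            exact_mod_cast congrArg (fun z : ℤ => (z : ℚ)) hmz.symm
          push_cast
          linarith [this]
        rw [Finset.prod_congr rfl hterm]
        have hsum : m + (r - ((j : ℕ) + 1)) = 2 * r - 1 - 2 * (i : ℕ) := by omega
        have := asc_prod m (r - ((j : ℕ) + 1))
        rw [hsum] at this
        have hne : (m ! : ℚ) ≠ 0 := Nat.cast_ne_zero.mpr (Nat.factorial_ne_zero _)
        rw [eq_div_iff hne, mul_comm]
        exact this
      have h2 : (∏ k ∈ Finset.range (j : ℕ), ((e : ℚ) - k - ((r : ℚ) - 2 * (i : ℕ))))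
          = ((e - r + 2 * (i : ℕ))! : ℚ) / ((e - m)! : ℚ) := by
        rw [← Finset.prod_range_reflect]
        have hterm : ∀ k ∈ Finset.range (j : ℕ),
            ((e : ℚ) - (((j : ℕ) - 1 - k : ℕ) : ℚ) - ((r : ℚ) - 2 * (i : ℕ)))
              = ((e - m : ℕ) : ℚ) + 1 + k := by
          intro k hk
          have hk' : k < (j : ℕ) := Finset.mem_range.mp hk
          have h1' : (((j : ℕ) - 1 - k : ℕ) : ℚ) = (j : ℕ) - 1 - k := by
            have : ((((j : ℕ) - 1 - k : ℕ)) : ℤ) = (j : ℕ) - 1 - k := by omega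
            exact_mod_cast congrArg (fun z : ℤ => (z : ℚ)) this
          have h2' : ((e - m : ℕ) : ℚ) = (e : ℚ) - m := by
            have : (((e - m : ℕ)) : ℤ) = (e : ℤ) - m := by omega
            exact_mod_cast congrArg (fun z : ℤ => (z : ℚ)) this
          have h3' : ((r : ℚ) - 2 * (i : ℕ) + (j : ℕ)) = (m : ℚ) := by
            exact_mod_cast congrArg (fun z : ℤ => (z : ℚ)) hmz.symm
          rw [h1', h2']
          linarith [h3']
        rw [Finset.prod_congr rfl hterm]
        have hsum : (e - m) + (j : ℕ) = e - r + 2 * (i : ℕ) := by omega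
        have := asc_prod (e - m) (j : ℕ)
        rw [hsum] at this
        have hne : ((e - m)! : ℚ) ≠ 0 := Nat.cast_ne_zero.mpr (Nat.factorial_ne_zero _)
        rw [eq_div_iff hne, mul_comm]
        exact this
      rw [h1, h2]
      have hne1 : ((2 * r - 1 - 2 * (i : ℕ))! : ℚ) ≠ 0 :=
        Nat.cast_ne_zero.mpr (Nat.factorial_ne_zero _)
      have hne2 : ((e - r + 2 * (i : ℕ))! : ℚ) ≠ 0 :=
        Nat.cast_ne_zero.mpr (Nat.factorial_ne_zero _)
      have hne3 : (m ! : ℚ) ≠ 0 := Nat.cast_ne_zero.mpr (Nat.factorial_ne_zero _)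
      have hne4 : ((e - m)! : ℚ) ≠ 0 := Nat.cast_ne_zero.mpr (Nat.factorial_ne_zero _)
      field_simp
    · -- m > e : both sides vanish
      have hlt : e < m := by omega
      rw [Nat.choose_eq_zero_of_lt hlt, Nat.cast_zero]
      have hk0 : e + 2 * (i : ℕ) - r < (j : ℕ) := by omega
      have hzero : (∏ k ∈ Finset.range (j : ℕ), ((e : ℚ) - k - ((r : ℚ) - 2 * (i : ℕ)))) = 0 := by
        refine Finset.prod_eq_zero (Finset.mem_range.mpr hk0) ?_
        have hcast : (((e + 2 * (i : ℕ) - r : ℕ)) : ℚ) = (e : ℚ) + 2 * (i : ℕ) - r := by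
          have : (((e + 2 * (i : ℕ) - r : ℕ)) : ℤ) = (e : ℤ) + 2 * (i : ℕ) - r := by omega
          exact_mod_cast congrArg (fun z : ℤ => (z : ℚ)) this
        rw [hcast]; ring
      rw [hzero, mul_zero, mul_zero]
  · rw [dif_neg hzn]
    have hk0lt : 2 * (i : ℕ) - r < r := by omega
    have hk0ge : (j : ℕ) + 1 ≤ 2 * (i : ℕ) - r := by omega
    have hzero : (∏ k ∈ Finset.Ico ((j : ℕ) + 1) r, ((r : ℚ) - 2 * (i : ℕ) + k)) = 0 := by
      refine Finset.prod_eq_zero (Finset.mem_Ico.mpr ⟨hk0ge, hk0lt⟩) ?_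
      have hc : (((2 * (i : ℕ) - r : ℕ)) : ℚ) = 2 * ((i : ℕ) : ℚ) - r := by
        have : (((2 * (i : ℕ) - r : ℕ)) : ℤ) = 2 * ((i : ℕ) : ℤ) - r := by omega
        exact_mod_cast congrArg (fun z : ℤ => (z : ℚ)) this
      rw [hc]; ring
    rw [hzero, zero_mul, mul_zero]


/-- Decomposition of the evaluation matrix as Vandermonde times coefficient matrix. -/
private lemma eval_mat_eq (e r : ℕ) (v : Fin r → ℚ) :
    Matrix.of (fun i j : Fin r => (auxP e r (j : ℕ)).eval (v i)) =
      (Matrix.vandermonde v) * Matrix.of (fun k j : Fin r => (auxP e r (j : ℕ)).coeff k) := by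
  ext i j
  rw [Matrix.mul_apply, Matrix.of_apply,
    Polynomial.eval_eq_sum_range' (auxP_natDegree_lt e r j j.isLt) (v i),
    ← Fin.sum_univ_eq_sum_range (fun k => (auxP e r (j : ℕ)).coeff k * v i ^ k) r]
  refine Finset.sum_congr rfl fun k _ => ?_
  rw [Matrix.vandermonde_apply, Matrix.of_apply, mul_comm]

/-- The evaluation matrix at the points `e - i` is triangular. -/
private lemma tri_det (e r : ℕ) :
    Matrix.det (Matrix.of fun i j : Fin r => (auxP e r (j : ℕ)).eval ((e : ℚ) - (i : ℕ))) =
      ∏ i : Fin r, (auxP e r (i : ℕ)).eval ((e : ℚ) - (i : ℕ)) := by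
  refine Matrix.det_of_lowerTriangular _ fun i j hij => ?_
  have hij' : (i : ℕ) < (j : ℕ) := hij
  rw [Matrix.of_apply, auxP_eval]
  have hzero : (∏ k ∈ Finset.range (j : ℕ), ((e : ℚ) - k - ((e : ℚ) - (i : ℕ)))) = 0 :=
    Finset.prod_eq_zero (Finset.mem_range.mpr hij') (by ring)
  rw [hzero, mul_zero]

/-- Value of the diagonal entries of the triangular matrix. -/
private lemma diag_eval (e r : ℕ) (i : Fin r) :
    (auxP e r (i : ℕ)).eval ((e : ℚ) - (i : ℕ)) =
      ((e + (r - 1 - (i : ℕ)))! : ℚ) / (e ! : ℚ) * ((i : ℕ)! : ℚ) := by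
  rw [auxP_eval]
  have h1 : (∏ k ∈ Finset.Ico ((i : ℕ) + 1) r, ((e : ℚ) - (i : ℕ) + k))
      = ((e + (r - 1 - (i : ℕ)))! : ℚ) / (e ! : ℚ) := by
    rw [Finset.prod_Ico_eq_prod_range]
    have hterm : ∀ t ∈ Finset.range (r - ((i : ℕ) + 1)),
        ((e : ℚ) - (i : ℕ) + ((((i : ℕ) + 1) + t : ℕ) : ℚ)) = ((e : ℚ) + 1 + t) := by
      intro t _; push_cast; ring
    rw [Finset.prod_congr rfl hterm]
    have hne : (e ! : ℚ) ≠ 0 := Nat.cast_ne_zero.mpr (Nat.factorial_ne_zero _)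
    have := asc_prod e (r - ((i : ℕ) + 1))
    rw [eq_div_iff hne, mul_comm,
      show r - 1 - (i : ℕ) = r - ((i : ℕ) + 1) from by omega]
    exact this
  have h2 : (∏ k ∈ Finset.range (i : ℕ), ((e : ℚ) - k - ((e : ℚ) - (i : ℕ)))) = ((i : ℕ)! : ℚ) := by
    rw [← Finset.prod_range_reflect]
    have hterm : ∀ k ∈ Finset.range (i : ℕ),
        ((e : ℚ) - (((i : ℕ) - 1 - k : ℕ) : ℚ) - ((e : ℚ) - (i : ℕ))) = (((0:ℕ) : ℚ)) + 1 + k := by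
      intro k hk
      have hk' : k < (i : ℕ) := Finset.mem_range.mp hk
      have h1' : (((i : ℕ) - 1 - k : ℕ) : ℚ) = ((i : ℕ) : ℚ) - 1 - k := by
        have : ((((i : ℕ) - 1 - k : ℕ)) : ℤ) = ((i : ℕ) : ℤ) - 1 - k := by omega
        exact_mod_cast congrArg (fun z : ℤ => (z : ℚ)) this
      rw [h1']; push_cast; ring
    rw [Finset.prod_congr rfl hterm]
    have := asc_prod 0 (i : ℕ)
    simpa using this
  rw [h1, h2]

/-- The final factorial-product identity. -/
private lemma final_prod_id (e r : ℕ) (hre : r ≤ e) :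
    (∏ j ∈ Finset.range r, ((e + j).choose (r - j) : ℚ)) /
      (∏ j ∈ Finset.range r, ((2 * j + 1).choose j : ℚ)) =
    (∏ j ∈ Finset.range r,
        ((e ! : ℚ) / (((2 * r - 1 - 2 * j)! : ℚ) * ((e - r + 2 * j)! : ℚ)))) *
      ∏ j ∈ Finset.range r, (((e + (r - 1 - j))! : ℚ) / (e ! : ℚ) * ((j)! : ℚ)) := by
  have hA : ∀ j ∈ Finset.range r, ((e + j).choose (r - j) : ℚ)
      = ((e + j)! : ℚ) / (((r - j)! : ℚ) * ((e + 2 * j - r)! : ℚ)) := by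
    intro j hj
    have hj' : j < r := Finset.mem_range.mp hj
    have hle : r - j ≤ e + j := by omega
    rw [Nat.cast_choose ℚ hle]
    have h' : (e + j) - (r - j) = e + 2 * j - r := by omega
    rw [h']
  have hB : ∀ j ∈ Finset.range r, ((2 * j + 1).choose j : ℚ)
      = ((2 * j + 1)! : ℚ) / ((j ! : ℚ) * ((j + 1)! : ℚ)) := by
    intro j _
    have hle : j ≤ 2 * j + 1 := by omega
    rw [Nat.cast_choose ℚ hle]
    have h' : (2 * j + 1) - j = j + 1 := by omega
    rw [h']
  rw [Finset.prod_congr rfl hA, Finset.prod_congr rfl hB]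
  have e1 : (∏ j ∈ Finset.range r, ((2 * r - 1 - 2 * j)! : ℚ))
      = ∏ j ∈ Finset.range r, ((2 * j + 1)! : ℚ) := by
    calc (∏ j ∈ Finset.range r, ((2 * r - 1 - 2 * j)! : ℚ))
        = ∏ j ∈ Finset.range r, ((2 * (r - 1 - j) + 1)! : ℚ) := by
          refine Finset.prod_congr rfl fun j hj => ?_
          have hj' : j < r := Finset.mem_range.mp hj
          have h' : 2 * r - 1 - 2 * j = 2 * (r - 1 - j) + 1 := by omega
          rw [h']
      _ = ∏ j ∈ Finset.range r, ((2 * j + 1)! : ℚ) :=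
          Finset.prod_range_reflect (fun j => ((2 * j + 1)! : ℚ)) r
  have e2 : (∏ j ∈ Finset.range r, ((e + (r - 1 - j))! : ℚ))
      = ∏ j ∈ Finset.range r, ((e + j)! : ℚ) :=
    Finset.prod_range_reflect (fun j => ((e + j)! : ℚ)) r
  have e3 : (∏ j ∈ Finset.range r, ((j + 1)! : ℚ))
      = ∏ j ∈ Finset.range r, ((r - j)! : ℚ) := by
    calc (∏ j ∈ Finset.range r, ((j + 1)! : ℚ))
        = ∏ j ∈ Finset.range r, ((r - (r - 1 - j))! : ℚ) := by
          refine Finset.prod_congr rfl fun j hj => ?_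
          have hj' : j < r := Finset.mem_range.mp hj
          have h' : r - (r - 1 - j) = j + 1 := by omega
          rw [h']
      _ = ∏ j ∈ Finset.range r, ((r - j)! : ℚ) :=
          Finset.prod_range_reflect (fun j => ((r - j)! : ℚ)) r
  have e4 : (∏ j ∈ Finset.range r, ((e - r + 2 * j)! : ℚ))
      = ∏ j ∈ Finset.range r, ((e + 2 * j - r)! : ℚ) := by
    refine Finset.prod_congr rfl fun j _ => ?_
    have h' : e - r + 2 * j = e + 2 * j - r := by omega
    rw [h']
  simp only [Finset.prod_div_distrib, Finset.prod_mul_distrib]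
  rw [e1, e2, e3, e4]
  have hne : ∀ f : ℕ → ℕ, (∏ j ∈ Finset.range r, ((f j)! : ℚ)) ≠ 0 := fun f =>
    Finset.prod_ne_zero_iff.mpr fun j _ => Nat.cast_ne_zero.mpr (Nat.factorial_ne_zero _)
  have h1 := hne (fun j => e + j)
  have h2 := hne (fun j => r - j)
  have h3 := hne (fun j => e + 2 * j - r)
  have h4 := hne (fun j => 2 * j + 1)
  have h5 := hne (fun j => j)
  have h6 := hne (fun j => e)
  field_simp

/-- The two expressions for the degree `A_e^r` of the corank-`r` symmetric
determinantal variety agree: the ratio of binomial products equals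
`2^{-C(r,2)}` times the determinant of the `r × r` matrix with entries
`C(e, r+1-2i+j)` for `i, j = 1, …, r` (with `C(n,k) = 0` for `k < 0`). -/
theorem degree_symmetric_determinantal_two_formulas (e r : ℕ) (he : 1 ≤ e) (hre : r ≤ e) :
    (∏ j ∈ Finset.range r, ((e + j).choose (r - j) : ℚ)) /
      (∏ j ∈ Finset.range r, ((2 * j + 1).choose j : ℚ)) =
    (2 : ℚ) ^ (-(r.choose 2 : ℤ)) *
      Matrix.det (fun i j : Fin r =>
        if h : (0 : ℤ) ≤ (r : ℤ) + 1 - 2 * ((i : ℤ) + 1) + ((j : ℤ) + 1) then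
          (e.choose ((r : ℤ) + 1 - 2 * ((i : ℤ) + 1) + ((j : ℤ) + 1)).toNat : ℚ)
        else 0) := by
  classical
  set x : Fin r → ℚ := fun i => (r : ℚ) - 2 * (i : ℕ) with hx
  set y : Fin r → ℚ := fun i => (e : ℚ) - (i : ℕ) with hy
  set c : Fin r → ℚ := fun i =>
    (e ! : ℚ) / (((2 * r - 1 - 2 * (i : ℕ))! : ℚ) * ((e - r + 2 * (i : ℕ))! : ℚ)) with hc
  set Ac : Matrix (Fin r) (Fin r) ℚ := Matrix.of fun k j : Fin r => (auxP e r (j : ℕ)).coeff k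
    with hAc
  -- Step 1: factor the matrix and its determinant
  have hMeq : (fun i j : Fin r =>
      if h : (0 : ℤ) ≤ (r : ℤ) + 1 - 2 * ((i : ℤ) + 1) + ((j : ℤ) + 1) then
        (e.choose ((r : ℤ) + 1 - 2 * ((i : ℤ) + 1) + ((j : ℤ) + 1)).toNat : ℚ)
      else 0) = Matrix.of (fun i j : Fin r => c i * (auxP e r (j : ℕ)).eval (x i)) :=
    funext fun i => funext fun j => entry_eq e r hre i j
  have hdet1 : Matrix.det (fun i j : Fin r =>
      if h : (0 : ℤ) ≤ (r : ℤ) + 1 - 2 * ((i : ℤ) + 1) + ((j : ℤ) + 1) then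
        (e.choose ((r : ℤ) + 1 - 2 * ((i : ℤ) + 1) + ((j : ℤ) + 1)).toNat : ℚ)
      else 0) = (∏ i : Fin r, c i) * ((Matrix.vandermonde x).det * Ac.det) := by
    rw [hMeq]
    calc (Matrix.of fun i j : Fin r => c i * (auxP e r (j : ℕ)).eval (x i)).det
        = (∏ i : Fin r, c i) *
          (Matrix.of fun i j : Fin r => (auxP e r (j : ℕ)).eval (x i)).det :=
          Matrix.det_mul_column c _
      _ = (∏ i : Fin r, c i) * ((Matrix.vandermonde x).det * Ac.det) := by
          rw [eval_mat_eq e r x, Matrix.det_mul, ← hAc]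
  -- Step 2: determinant at the triangular points
  have hdet2 : (Matrix.vandermonde y).det * Ac.det
      = ∏ i : Fin r, (auxP e r (i : ℕ)).eval ((e : ℚ) - (i : ℕ)) := by
    rw [← Matrix.det_mul, ← eval_mat_eq e r y, ← tri_det e r]
  -- Step 3: comparison of the two Vandermonde determinants
  have hcount : ∑ i : Fin r, (Finset.Ioi i).card = r.choose 2 := by
    simp only [Fin.card_Ioi]
    rw [Fin.sum_univ_eq_sum_range (fun i => r - 1 - i) r]
    have hgauss := Finset.sum_range_id_mul_two r
    have hrefl : ∑ i ∈ Finset.range r, (r - 1 - i) = ∑ i ∈ Finset.range r, i :=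
      Finset.sum_range_reflect (fun i => i) r
    rw [hrefl, Nat.choose_two_right]
    omega
  have hvdm : (Matrix.vandermonde x).det
      = 2 ^ (r.choose 2) * (Matrix.vandermonde y).det := by
    rw [Matrix.det_vandermonde, Matrix.det_vandermonde]
    have hinner : ∀ i : Fin r, (∏ j ∈ Finset.Ioi i, (x j - x i))
        = 2 ^ (Finset.Ioi i).card * ∏ j ∈ Finset.Ioi i, (y j - y i) := by
      intro i
      have : ∀ j ∈ Finset.Ioi i, (x j - x i) = 2 * (y j - y i) := by
        intro j _
        simp only [hx, hy]
        ring
      rw [Finset.prod_congr rfl this, Finset.prod_mul_distrib, Finset.prod_const]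
    rw [Finset.prod_congr rfl fun i _ => hinner i, Finset.prod_mul_distrib,
      Finset.prod_pow_eq_pow_sum, hcount]
  -- Step 4: assemble
  have key : Matrix.det (fun i j : Fin r =>
      if h : (0 : ℤ) ≤ (r : ℤ) + 1 - 2 * ((i : ℤ) + 1) + ((j : ℤ) + 1) then
        (e.choose ((r : ℤ) + 1 - 2 * ((i : ℤ) + 1) + ((j : ℤ) + 1)).toNat : ℚ)
      else 0) = (∏ i : Fin r, c i) * 2 ^ (r.choose 2) *
        ∏ i : Fin r, (auxP e r (i : ℕ)).eval ((e : ℚ) - (i : ℕ)) := by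
    rw [hdet1, hvdm, ← hdet2]
    ring
  rw [key]
  have h2pow : (2 : ℚ) ^ (-(r.choose 2 : ℤ)) *
      ((∏ i : Fin r, c i) * 2 ^ (r.choose 2) *
        ∏ i : Fin r, (auxP e r (i : ℕ)).eval ((e : ℚ) - (i : ℕ)))
      = (∏ i : Fin r, c i) * ∏ i : Fin r, (auxP e r (i : ℕ)).eval ((e : ℚ) - (i : ℕ)) := by
    have hz : (2 : ℚ) ^ (-(r.choose 2 : ℤ)) = ((2 : ℚ) ^ (r.choose 2))⁻¹ := by
      rw [zpow_neg, zpow_natCast]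
    have hnz : ((2 : ℚ) ^ (r.choose 2)) ≠ 0 := pow_ne_zero _ two_ne_zero
    rw [hz]
    field_simp
  rw [h2pow]
  -- Step 5: the factorial identity
  have hdiag : (∏ i : Fin r, (auxP e r (i : ℕ)).eval ((e : ℚ) - (i : ℕ)))
      = ∏ i : Fin r, (((e + (r - 1 - (i : ℕ)))! : ℚ) / (e ! : ℚ) * ((i : ℕ)! : ℚ)) :=
    Finset.prod_congr rfl fun i _ => diag_eval e r i
  rw [hdiag, hc]
  rw [Fin.prod_univ_eq_prod_range (fun i =>
      (e ! : ℚ) / (((2 * r - 1 - 2 * i)! : ℚ) * ((e - r + 2 * i)! : ℚ))) r,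
    Fin.prod_univ_eq_prod_range (fun i =>
      (((e + (r - 1 - i))! : ℚ) / (e ! : ℚ) * ((i)! : ℚ))) r]
  exact final_prod_id e r hre
end

section
/- For every real ℓ ≥ 1, the quantity (13ℓ-2)(36ℓ-13)(27ℓ²-19ℓ+2)(36ℓ²-13ℓ-1) / (2(9ℓ-2)(9ℓ-1)(15552ℓ⁶-25920ℓ⁵+17484ℓ⁴-6102ℓ³+1181ℓ²-107ℓ+2)(36ℓ²-13ℓ+2)) is strictly positive; consequently the slope s = 6 + 12/(g+1) − (this quantity), with g = (4ℓ-1)(9ℓ-1), satisfies s < 6 + 12/(g+1). -/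
/-- For every real `ℓ ≥ 1`, the slope deficit of the divisor `D_{9ℓ-2,4ℓ-1}` is
strictly positive; hence the slope `s = 6 + 12/(g+1) - deficit`, with
`g = (4ℓ-1)(9ℓ-1)`, satisfies `s < 6 + 12/(g+1)`. -/
theorem slope_deficit_positive (l : ℝ) (hl : 1 ≤ l) :
    0 < (13 * l - 2) * (36 * l - 13) * (27 * l ^ 2 - 19 * l + 2) *
          (36 * l ^ 2 - 13 * l - 1) /
        (2 * (9 * l - 2) * (9 * l - 1) *
          (15552 * l ^ 6 - 25920 * l ^ 5 + 17484 * l ^ 4 - 6102 * l ^ 3 +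
            1181 * l ^ 2 - 107 * l + 2) * (36 * l ^ 2 - 13 * l + 2)) ∧
    (6 + 12 / ((4 * l - 1) * (9 * l - 1) + 1) -
        (13 * l - 2) * (36 * l - 13) * (27 * l ^ 2 - 19 * l + 2) *
            (36 * l ^ 2 - 13 * l - 1) /
          (2 * (9 * l - 2) * (9 * l - 1) *
            (15552 * l ^ 6 - 25920 * l ^ 5 + 17484 * l ^ 4 - 6102 * l ^ 3 +
              1181 * l ^ 2 - 107 * l + 2) * (36 * l ^ 2 - 13 * l + 2))) <
      6 + 12 / ((4 * l - 1) * (9 * l - 1) + 1) := by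
  have ht : 0 ≤ l - 1 := by linarith
  have h1 : 0 < 13 * l - 2 := by nlinarith
  have h2 : 0 < 36 * l - 13 := by nlinarith
  have h3 : 0 < 27 * l ^ 2 - 19 * l + 2 := by nlinarith [sq_nonneg (l - 1)]
  have h4 : 0 < 36 * l ^ 2 - 13 * l - 1 := by nlinarith [sq_nonneg (l - 1)]
  have h5 : 0 < 9 * l - 2 := by nlinarith
  have h6 : 0 < 9 * l - 1 := by nlinarith
  have h7 : 0 < 15552 * l ^ 6 - 25920 * l ^ 5 + 17484 * l ^ 4 - 6102 * l ^ 3 +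
      1181 * l ^ 2 - 107 * l + 2 := by
    nlinarith [sq_nonneg (l - 1),  
      mul_nonneg (mul_nonneg ht ht) ht, sq_nonneg ((l - 1) ^ 3), sq_nonneg ((l - 1) ^ 2),
      mul_nonneg (mul_nonneg (mul_nonneg ht ht) ht) (mul_nonneg ht ht),
      mul_nonneg (mul_nonneg (mul_nonneg ht ht) ht) ht]
  have h8 : 0 < 36 * l ^ 2 - 13 * l + 2 := by nlinarith [sq_nonneg (l - 1)]
  have hnum : 0 < (13 * l - 2) * (36 * l - 13) * (27 * l ^ 2 - 19 * l + 2) *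
      (36 * l ^ 2 - 13 * l - 1) := by positivity
  have hden : 0 < 2 * (9 * l - 2) * (9 * l - 1) *
      (15552 * l ^ 6 - 25920 * l ^ 5 + 17484 * l ^ 4 - 6102 * l ^ 3 +
        1181 * l ^ 2 - 107 * l + 2) * (36 * l ^ 2 - 13 * l + 2) := by positivity
  have hq := div_pos hnum hden
  exact ⟨hq, by linarith⟩
end
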